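/- The Higman group J, presented by generators a₁, a₂, a₃, a₄ subject to the relations a₂⁻¹a₁a₂ = a₁², a₃⁻¹a₂a₃ = a₂², a₄⁻¹a₃a₄ = a₃², a₁⁻¹a₄a₁ = a₄², has no nontrivial finite quotients: every homomorphism from J to a finite group is trivial. -/

import Mathlib

/-- Conjugation relation iterated: if `y⁻¹ x y = x²` then `(yᵏ)⁻¹ x yᵏ = x^(2ᵏ)`. -/
lemma higman_conj_pow_lemma {G : Type*} [Group G] (x y : G) (h : y⁻¹ * x * y = x ^ 2)
    (k : ℕ) : (y ^ k)⁻¹ * x * y ^ k = x ^ (2 ^ k) := by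
  induction k with
  | zero => simp
  | succ k ih =>
    have e1 : (y ^ (k+1))⁻¹ * x * y ^ (k+1) = y⁻¹ * ((y ^ k)⁻¹ * x * y ^ k) * y := by
      group
    have e2 : y⁻¹ * x ^ (2 ^ k) * y = (y⁻¹ * x * y) ^ (2 ^ k) := by
      rw [show y⁻¹ * x * y = y⁻¹ * x * y⁻¹⁻¹ by group, conj_pow]; group
    rw [e1, ih, e2, h, ← pow_mul, ← pow_succ']

/-- In a finite group, if `y⁻¹ x y = x²` then `orderOf x ∣ 2 ^ orderOf y - 1`. -/
lemma higman_order_dvd_of_conj {G : Type*} [Group G] [Finite G] (x y : G)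
    (h : y⁻¹ * x * y = x ^ 2) : orderOf x ∣ 2 ^ (orderOf y) - 1 := by
  have h1 := higman_conj_pow_lemma x y h (orderOf y)
  rw [pow_orderOf_eq_one] at h1
  simp at h1
  apply orderOf_dvd_of_pow_eq_one
  have h2 : x ^ (2 ^ orderOf y - 1) * x = x := by
    rw [← pow_succ, Nat.sub_add_cancel Nat.one_le_two_pow]
    exact h1.symm
  exact mul_right_cancel (h2.trans (one_mul x).symm)

/-- Minimal-prime argument: if `p = N.minFac` divides `x`, `x ∣ 2^y - 1`, and `y ∣ N`
with `N > 1`, we get a contradiction (a prime smaller than `p` divides `N`). -/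
lemma higman_key_nt {N x y : ℕ} (hN : 1 < N) (hx : x ∣ 2 ^ y - 1) (hpx : N.minFac ∣ x)
    (hyN : y ∣ N) : False := by
  set p := N.minFac with hp
  have hpprime : p.Prime := Nat.minFac_prime (by omega)
  have hppos : 0 < p := hpprime.pos
  have hNpos : 0 < N := by omega
  have hy : 0 < y := Nat.pos_of_dvd_of_pos hyN hNpos
  have hpdvd : p ∣ 2 ^ y - 1 := hpx.trans hx
  have hp2 : p ≠ 2 := by
    intro h2
    rw [h2] at hpdvd
    have h1 : 1 ≤ 2 ^ y := Nat.one_le_two_pow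
    have h2' : 2 ∣ 2 ^ y := dvd_pow_self 2 hy.ne'
    omega
  haveI : Fact p.Prime := ⟨hpprime⟩
  have h2y : (2 : ZMod p) ^ y = 1 := by
    have : ((2 ^ y - 1 : ℕ) : ZMod p) = 0 := (ZMod.natCast_eq_zero_iff _ _).mpr hpdvd
    have h1 : (1:ℕ) ≤ 2 ^ y := Nat.one_le_two_pow
    rw [Nat.cast_sub h1] at this
    push_cast at this
    linear_combination this
  set e := orderOf (2 : ZMod p) with he
  have hey : e ∣ y := orderOf_dvd_of_pow_eq_one h2y
  have h2ne : (2 : ZMod p) ≠ 0 := by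
    intro h
    have hpd2 : p ∣ 2 := (ZMod.natCast_eq_zero_iff 2 p).mp (by exact_mod_cast h)
    exact hp2 ((Nat.prime_dvd_prime_iff_eq hpprime Nat.prime_two).mp hpd2)
  have hep : e ∣ p - 1 := ZMod.orderOf_dvd_card_sub_one h2ne
  have he1 : e ≠ 1 := by
    intro h1
    have : (2 : ZMod p) = 1 := orderOf_eq_one_iff.mp h1
    have : ((2:ℕ) : ZMod p) = ((1:ℕ) : ZMod p) := by push_cast; exact this
    have hmod := (ZMod.natCast_eq_natCast_iff _ _ _).mp this
    have : p ∣ 2 - 1 := (Nat.modEq_iff_dvd' (by norm_num)).mp hmod.symm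
    simp at this
    have h2le := hpprime.two_le
    omega
  have he0 : e ≠ 0 := by
    intro h0
    rw [h0] at hep
    have : p - 1 = 0 := Nat.eq_zero_of_zero_dvd hep
    have : 2 ≤ p := hpprime.two_le
    omega
  set q := e.minFac with hq
  have hqprime : q.Prime := Nat.minFac_prime he1
  have hqe : q ∣ e := Nat.minFac_dvd e
  have hqN : q ∣ N := (hqe.trans hey).trans hyN
  have hpq : p ≤ q := Nat.minFac_le_of_dvd hqprime.two_le hqN
  have hqp : q ≤ p - 1 := Nat.le_of_dvd (by have := hpprime.two_le; omega) (hqe.trans hep)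
  omega

/-- The arithmetic heart of Higman's argument. -/
lemma higman_nt {a b c d : ℕ} (ha : 0 < a) (hb : 0 < b) (hc : 0 < c) (hd : 0 < d)
    (h1 : a ∣ 2 ^ b - 1) (h2 : b ∣ 2 ^ c - 1) (h3 : c ∣ 2 ^ d - 1) (h4 : d ∣ 2 ^ a - 1) :
    a = 1 ∧ b = 1 ∧ c = 1 ∧ d = 1 := by
  by_contra hcon
  set N := a * b * c * d with hN
  have hNpos : 0 < N := by positivity
  have haN : a ∣ N := ⟨b * c * d, by ring⟩
  have hbN : b ∣ N := ⟨a * c * d, by ring⟩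
  have hcN : c ∣ N := ⟨a * b * d, by ring⟩
  have hdN : d ∣ N := ⟨a * b * c, by ring⟩
  have hN1 : 1 < N := by
    rcases Nat.lt_or_ge 1 N with h | h
    · exact h
    · exfalso; apply hcon
      have la := Nat.le_of_dvd hNpos haN
      have lb := Nat.le_of_dvd hNpos hbN
      have lc := Nat.le_of_dvd hNpos hcN
      have ld := Nat.le_of_dvd hNpos hdN
      omega
  have hdvd : N.minFac ∣ a * b * c * d := hN ▸ Nat.minFac_dvd N
  have hpp : N.minFac.Prime := Nat.minFac_prime (by omega)
  rcases (hpp.dvd_mul.mp hdvd) with h | h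
  · rcases (hpp.dvd_mul.mp h) with h' | h'
    · rcases (hpp.dvd_mul.mp h') with h'' | h''
      · exact higman_key_nt hN1 h1 h'' hbN
      · exact higman_key_nt hN1 h2 h'' hcN
    · exact higman_key_nt hN1 h3 h' hdN
  · exact higman_key_nt hN1 h4 h haN

/-- The four relators `aⱼ⁻¹ aᵢ aⱼ aᵢ⁻²` of Higman's group, for
`(i,j) ∈ {(0,1), (1,2), (2,3), (3,0)}`. -/
def higmanRels : Set (FreeGroup (Fin 4)) :=
  { (FreeGroup.of 1)⁻¹ * FreeGroup.of 0 * FreeGroup.of 1 * (FreeGroup.of 0)⁻¹ *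
      (FreeGroup.of 0)⁻¹,
    (FreeGroup.of 2)⁻¹ * FreeGroup.of 1 * FreeGroup.of 2 * (FreeGroup.of 1)⁻¹ *
      (FreeGroup.of 1)⁻¹,
    (FreeGroup.of 3)⁻¹ * FreeGroup.of 2 * FreeGroup.of 3 * (FreeGroup.of 2)⁻¹ *
      (FreeGroup.of 2)⁻¹,
    (FreeGroup.of 0)⁻¹ * FreeGroup.of 3 * FreeGroup.of 0 * (FreeGroup.of 3)⁻¹ *
      (FreeGroup.of 3)⁻¹ }

/-- Higman's group `⟨a₁,a₂,a₃,a₄ ∣ a₂⁻¹a₁a₂ = a₁², a₃⁻¹a₂a₃ = a₂², a₄⁻¹a₃a₄ = a₃²,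
a₁⁻¹a₄a₁ = a₄²⟩`, as the quotient of the free group on four generators by the normal
closure of the four relators. -/
abbrev HigmanGroup : Type := PresentedGroup higmanRels

/-- The Higman group has no nontrivial finite quotients: every
homomorphism from it to a finite group is trivial. -/
theorem stmt_19 : ∀ (F : Type u) [Group F] [Finite F] (φ : HigmanGroup →* F),
    φ = 1 := by
  intro F _ _ φ
  set ψ : FreeGroup (Fin 4) →* F :=
    φ.comp (QuotientGroup.mk' (Subgroup.normalClosure higmanRels)) with hψ
  have hrel : ∀ r ∈ higmanRels, ψ r = 1 := by
    intro r hr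
    have : (QuotientGroup.mk' (Subgroup.normalClosure higmanRels)) r = 1 :=
      (QuotientGroup.eq_one_iff r).mpr (Subgroup.subset_normalClosure hr)
    show φ ((QuotientGroup.mk' (Subgroup.normalClosure higmanRels)) r) = 1
    rw [this]; exact map_one φ
  set x : Fin 4 → F := fun i => ψ (FreeGroup.of i) with hx
  have conj : ∀ i j : Fin 4,
      ψ ((FreeGroup.of j)⁻¹ * FreeGroup.of i * FreeGroup.of j * (FreeGroup.of i)⁻¹ *
        (FreeGroup.of i)⁻¹) = 1 →
      (x j)⁻¹ * x i * x j = (x i) ^ 2 := by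
    intro i j h
    simp only [map_mul, map_inv] at h
    have e : (x j)⁻¹ * x i * x j * ((x i) ^ 2)⁻¹ =
        (ψ (FreeGroup.of j))⁻¹ * ψ (FreeGroup.of i) * ψ (FreeGroup.of j) *
        (ψ (FreeGroup.of i))⁻¹ * (ψ (FreeGroup.of i))⁻¹ := by
      simp only [hx]; group
    exact mul_inv_eq_one.mp (e.trans h)
  have c01 : (x 1)⁻¹ * x 0 * x 1 = (x 0) ^ 2 :=
    conj 0 1 (hrel _ (Set.mem_insert _ _))
  have c12 : (x 2)⁻¹ * x 1 * x 2 = (x 1) ^ 2 :=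
    conj 1 2 (hrel _ (Set.mem_insert_of_mem _ (Set.mem_insert _ _)))
  have c23 : (x 3)⁻¹ * x 2 * x 3 = (x 2) ^ 2 :=
    conj 2 3 (hrel _ (Set.mem_insert_of_mem _ (Set.mem_insert_of_mem _
      (Set.mem_insert _ _))))
  have c30 : (x 0)⁻¹ * x 3 * x 0 = (x 3) ^ 2 :=
    conj 3 0 (hrel _ (Set.mem_insert_of_mem _ (Set.mem_insert_of_mem _
      (Set.mem_insert_of_mem _ rfl))))
  have d01 := higman_order_dvd_of_conj _ _ c01
  have d12 := higman_order_dvd_of_conj _ _ c12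
  have d23 := higman_order_dvd_of_conj _ _ c23
  have d30 := higman_order_dvd_of_conj _ _ c30
  have hall := higman_nt (orderOf_pos (x 0)) (orderOf_pos (x 1)) (orderOf_pos (x 2))
    (orderOf_pos (x 3)) d01 d12 d23 d30
  have hx1 : ∀ i : Fin 4, x i = 1 := by
    intro i
    fin_cases i
    · exact orderOf_eq_one_iff.mp hall.1
    · exact orderOf_eq_one_iff.mp hall.2.1
    · exact orderOf_eq_one_iff.mp hall.2.2.1
    · exact orderOf_eq_one_iff.mp hall.2.2.2
  have hψ1 : ψ = 1 := FreeGroup.ext_hom ψ 1 (by intro a; simpa using hx1 a)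
  ext g
  show φ ((QuotientGroup.mk' (Subgroup.normalClosure higmanRels)) (FreeGroup.of g)) =
    (1 : HigmanGroup →* F) (PresentedGroup.of g)
  have : ψ (FreeGroup.of g) = 1 := hx1 g
  rw [hψ] at this
  exact this
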